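/- If z = xⁿ ∈ ℂ[x] (monic reduced) satisfies z² ≡ 0 (mod z'), then conversely the only monic polynomial z = xⁿ + a₂x^{n−2} + ⋯ + aₙ with z² ≡ 0 (mod z') is z = xⁿ. -/

import Mathlib

open Polynomial

theorem monic_reduced_with_deriv_dvd_sq (n : ℕ) (hn : 1 ≤ n) (z : Polynomial ℂ)
    (hm : z.Monic) (hd : z.natDegree = n) (hred : z.coeff (n - 1) = 0)
    (hdvd : Polynomial.derivative z ∣ z ^ 2) :
    z = Polynomial.X ^ n := by
  classical
  have hz0 : z ≠ 0 := hm.ne_zero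
  have hndpos : 0 < z.natDegree := hd ▸ hn
  have hdegder : (Polynomial.derivative z).degree = ((n - 1 : ℕ) : WithBot ℕ) := by
    rw [degree_derivative_eq z hndpos, hd]
  have hz'0 : Polynomial.derivative z ≠ 0 := by
    intro h
    rw [h, degree_zero] at hdegder
    exact (Option.some_ne_none _) hdegder.symm
  have hndder : (Polynomial.derivative z).natDegree = n - 1 :=
    natDegree_eq_of_degree_eq_some hdegder
  have hz2 : z ^ 2 ≠ 0 := pow_ne_zero _ hz0
  -- roots cardinalities
  have hcardz : z.roots.card = n := by
    rw [← hd]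
    exact Polynomial.splits_iff_card_roots.mp (IsAlgClosed.splits z)
  have hcardz' : (Polynomial.derivative z).roots.card = n - 1 := by
    rw [← hndder]
    exact Polynomial.splits_iff_card_roots.mp (IsAlgClosed.splits _)
  -- every root of z' is a root of z
  have hle : (Polynomial.derivative z).roots ≤ (z ^ 2).roots :=
    Polynomial.roots.le_of_dvd hz2 hdvd
  have hsub : (Polynomial.derivative z).roots.toFinset ⊆ z.roots.toFinset := by
    intro r hr
    rw [Multiset.mem_toFinset] at hr ⊢
    have : r ∈ (z ^ 2).roots := Multiset.mem_of_le hle hr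
    rw [roots_pow] at this
    exact (Multiset.mem_nsmul.mp this).2
  -- count in z' roots = count in z roots - 1, for r root of z
  have hcount : ∀ r ∈ z.roots.toFinset,
      (Polynomial.derivative z).roots.count r = z.roots.count r - 1 := by
    intro r hr
    rw [Multiset.mem_toFinset, mem_roots hz0] at hr
    rw [count_roots, count_roots, derivative_rootMultiplicity_of_root hr]
  -- counting argument
  have hsum' : (Polynomial.derivative z).roots.card
      = ∑ r ∈ z.roots.toFinset, (Polynomial.derivative z).roots.count r := by
    rw [← Multiset.toFinset_sum_count_eq]
    exact (Finset.sum_subset hsub (fun x _ hx =>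
      Multiset.count_eq_zero.mpr (fun h => hx (Multiset.mem_toFinset.mpr h))))
  have hsumz : ∑ r ∈ z.roots.toFinset, z.roots.count r = n := by
    rw [Multiset.toFinset_sum_count_eq, hcardz]
  have hpos : ∀ r ∈ z.roots.toFinset, 1 ≤ z.roots.count r := by
    intro r hr
    rw [Multiset.mem_toFinset] at hr
    exact Multiset.one_le_count_iff_mem.mpr hr
  have hcard1 : z.roots.toFinset.card = 1 := by
    have h1 : n - 1 = ∑ r ∈ z.roots.toFinset, (z.roots.count r - 1) := by
      rw [← hcardz', hsum']
      exact Finset.sum_congr rfl hcount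
    have h2 : n = ∑ r ∈ z.roots.toFinset, (z.roots.count r - 1)
        + z.roots.toFinset.card := by
      calc n = ∑ r ∈ z.roots.toFinset, z.roots.count r := hsumz.symm
        _ = ∑ r ∈ z.roots.toFinset, ((z.roots.count r - 1) + 1) :=
          Finset.sum_congr rfl (fun i hi => (Nat.sub_add_cancel (hpos i hi)).symm)
        _ = ∑ r ∈ z.roots.toFinset, (z.roots.count r - 1)
            + ∑ _r ∈ z.roots.toFinset, 1 := Finset.sum_add_distrib
        _ = _ := by rw [Finset.sum_const, smul_eq_mul, mul_one]
    omega
  obtain ⟨r, hr⟩ := Finset.card_eq_one.mp hcard1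
  -- z.roots = replicate n r
  have hroots : z.roots = Multiset.replicate n r := by
    rw [Multiset.eq_replicate]
    refine ⟨hcardz, fun b hb => ?_⟩
    have : b ∈ z.roots.toFinset := Multiset.mem_toFinset.mpr hb
    rw [hr, Finset.mem_singleton] at this
    exact this
  -- z = (X - r)^n
  have hz : z = (X - C r) ^ n := by
    have := (IsAlgClosed.splits z).eq_prod_roots_of_monic hm
    rw [hroots] at this
    simpa [Multiset.map_replicate, Multiset.prod_replicate] using this
  -- use coeff (n-1) = 0
  have hr0 : r = 0 := by
    have : ((X - C r) ^ n).coeff (n - 1) = 0 := hz ▸ hred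
    rw [sub_eq_add_neg, ← C_neg, coeff_X_add_C_pow] at this
    have hnn : n - (n - 1) = 1 := by omega
    rw [hnn, pow_one, Nat.choose_symm hn, Nat.choose_one_right] at this
    have hn0 : (n : ℂ) ≠ 0 := Nat.cast_ne_zero.mpr (by omega)
    rcases mul_eq_zero.mp this with h | h
    · exact neg_eq_zero.mp h
    · exact absurd h hn0
  rw [hz, hr0]
  simp
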